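/- Let A be a finitely generated ℤ^k-graded ℂ-algebra whose weight cone (the convex cone in ℚ^k generated by the degrees of nonzero homogeneous components) contains no line and with A₀ = ℂ. Then there exists a group homomorphism ℤ^k → ℤ under which the induced ℤ-grading of A is nonnegative with degree-zero component equal to ℂ; in particular Spec A is a quasicone. -/

import Mathlib

/-!
STATEMENT 5: Let `A` be a finitely generated `ℤ^k`-graded ℂ-algebra whose weight cone
(the convex cone over ℚ generated by the occurring degrees) contains no line, and with
`A₀ = ℂ`.  Then there is a homomorphism `ℤ^k → ℤ` under which the induced `ℤ`-grading is
nonnegative and its degree-zero component is `ℂ` (only the weight `0` is mapped to `0`);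
in particular `Spec A` is a quasicone.
-/

/-- Part C step 1: no nontrivial nonneg rational relation implies 0 not in real convex hull. -/
private lemma aux_zero_not_mem_hull {k n : ℕ} (v : Fin n → (Fin k → ℚ))
    (hv : ∀ c : Fin n → ℚ, (∀ j, 0 ≤ c j) → ∑ j, c j • v j = 0 → ∀ j, c j = 0) :
    (0 : Fin k → ℝ) ∉ convexHull ℝ (Set.range fun j (i : Fin k) => ((v j i : ℚ) : ℝ)) := by
  classical
  intro h0
  obtain ⟨ι, hfin, z, w, hrange, hai, hwpos, hwsum, hwz⟩ :=
    eq_pos_convex_span_of_mem_convexHull h0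
  have hz : ∀ i : ι, ∃ j : Fin n, (fun i' => ((v j i' : ℚ) : ℝ)) = z i := fun i =>
    hrange (Set.mem_range_self i)
  choose jdx hjdx using hz
  have hzval : ∀ (i : ι) (a : Fin k), z i a = ((v (jdx i) a : ℚ) : ℝ) := fun i a =>
    (congrFun (hjdx i) a).symm
  haveI : Nonempty ι := by
    by_contra h
    rw [not_nonempty_iff] at h
    rw [Finset.univ_eq_empty, Finset.sum_empty] at hwsum
    exact zero_ne_one hwsum
  set N : Matrix (Fin k ⊕ Unit) ι ℚ :=
    fun a i => Sum.elim (fun a' => v (jdx i) a') (fun _ => (1:ℚ)) a with hN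
  have hker : LinearMap.ker (Matrix.toLin' N) = ⊥ := by
    rw [LinearMap.ker_eq_bot']
    intro c hc
    have hc' : N.mulVec c = 0 := hc
    have h1 : ∑ i, c i = 0 := by
      have := congrFun hc' (Sum.inr ())
      simpa [Matrix.mulVec, dotProduct, hN] using this
    have h2 : ∀ a, ∑ i, c i * v (jdx i) a = 0 := by
      intro a
      have := congrFun hc' (Sum.inl a)
      simpa [Matrix.mulVec, dotProduct, hN, mul_comm] using this
    have hall := hai.eq_zero_of_sum_eq_zero (s := Finset.univ)
      (w := fun i => ((c i : ℚ) : ℝ)) ?_ ?_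
    · funext i
      exact_mod_cast hall i (Finset.mem_univ i)
    · exact_mod_cast congrArg (fun q : ℚ => (q : ℝ)) h1
    · funext a
      simp only [Finset.sum_apply, Pi.smul_apply, smul_eq_mul, Pi.zero_apply]
      have : ∀ i : ι, ((c i : ℚ) : ℝ) * z i a = ((c i * v (jdx i) a : ℚ) : ℝ) := by
        intro i; rw [hzval]; push_cast; ring
      rw [Finset.sum_congr rfl fun i _ => this i, ← Rat.cast_sum, h2 a, Rat.cast_zero]
  obtain ⟨g, hg⟩ := LinearMap.exists_leftInverse_of_injective (Matrix.toLin' N) hker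
  set L : Matrix ι (Fin k ⊕ Unit) ℚ := LinearMap.toMatrix' g with hL
  have hLN : L * N = 1 := by
    have := congrArg LinearMap.toMatrix' hg
    rwa [LinearMap.toMatrix'_comp, LinearMap.toMatrix'_toLin', LinearMap.toMatrix'_id] at this
  have hLNr : L.map (fun q : ℚ => (q : ℝ)) * N.map (fun q : ℚ => (q : ℝ)) = 1 := by
    have h := congrArg (Matrix.map · (Rat.castHom ℝ : ℚ →+* ℝ)) hLN
    simp only [Matrix.map_mul] at h
    rw [Matrix.map_one _ (map_zero _) (map_one _)] at h
    exact h
  set bq : Fin k ⊕ Unit → ℚ := Sum.elim (fun _ => (0:ℚ)) (fun _ => 1) with hbq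
  have hNw : (N.map (fun q : ℚ => (q : ℝ))).mulVec w = fun a => ((bq a : ℚ) : ℝ) := by
    funext a
    cases a with
    | inl a' =>
      have h := congrFun hwz a'
      simp only [Finset.sum_apply, Pi.smul_apply, smul_eq_mul, Pi.zero_apply] at h
      simp only [Matrix.mulVec, dotProduct, Matrix.map_apply, Matrix.map, Matrix.of_apply, hN, hbq, Sum.elim_inl,
        Rat.cast_zero]
      rw [← h]
      apply Finset.sum_congr rfl
      intro i _
      rw [hzval]
      simp [mul_comm]
    | inr u =>
      simp only [Matrix.mulVec, dotProduct, Matrix.map_apply, Matrix.map, Matrix.of_apply, hN, hbq, Sum.elim_inr,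
        Rat.cast_one, one_mul]
      exact hwsum
  set d : ι → ℚ := L.mulVec bq with hd
  have hwd : ∀ i, w i = ((d i : ℚ) : ℝ) := by
    intro i
    have h1 : w = (L.map (fun q : ℚ => (q : ℝ))).mulVec (fun a => ((bq a : ℚ) : ℝ)) := by
      rw [← hNw, Matrix.mulVec_mulVec, hLNr, Matrix.one_mulVec]
    rw [congrFun h1 i, hd]
    simp only [Matrix.mulVec, dotProduct, Matrix.map_apply]
    push_cast
    rfl
  have hdpos : ∀ i, 0 < d i := by
    intro i
    have := hwpos i
    rw [hwd i] at this
    exact_mod_cast this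
  have hrel : ∀ a, ∑ i, d i * v (jdx i) a = 0 := by
    intro a
    have h := congrFun hwz a
    simp only [Finset.sum_apply, Pi.smul_apply, smul_eq_mul, Pi.zero_apply] at h
    have : ((∑ i, d i * v (jdx i) a : ℚ) : ℝ) = 0 := by
      rw [Rat.cast_sum, ← h]
      apply Finset.sum_congr rfl
      intro i _
      rw [hzval, hwd i]
      push_cast
      ring
    exact_mod_cast this
  set c : Fin n → ℚ := fun jj => ∑ i ∈ Finset.univ.filter (fun i => jdx i = jj), d i with hc
  have hc0 : ∀ jj, 0 ≤ c jj :=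
    fun jj => Finset.sum_nonneg fun i _ => (hdpos i).le
  have hcsum : ∑ jj, c jj • v jj = 0 := by
    funext a
    simp only [Finset.sum_apply, Pi.smul_apply, smul_eq_mul, Pi.zero_apply]
    have h3 : ∀ jj : Fin n, c jj * v jj a = ∑ i ∈ Finset.univ.filter (fun i => jdx i = jj),
        d i * v (jdx i) a := by
      intro jj
      simp only [hc, Finset.sum_mul]
      apply Finset.sum_congr rfl
      intro i hi
      rw [Finset.mem_filter] at hi
      rw [hi.2]
    rw [Finset.sum_congr rfl fun jj _ => h3 jj,
      Finset.sum_fiberwise_of_maps_to (fun i _ => Finset.mem_univ (jdx i))]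
    exact hrel a
  have hzero := hv c hc0 hcsum
  obtain ⟨i0⟩ := ‹Nonempty ι›
  have hpos : 0 < c (jdx i0) := by
    apply Finset.sum_pos (fun i _ => hdpos i)
    exact ⟨i0, by simp⟩
  rw [hzero (jdx i0)] at hpos
  exact lt_irrefl 0 hpos

/-- Gordan-type lemma over ℚ: if there is no nontrivial nonnegative relation among the
vectors `v j`, then some rational linear functional is strictly positive on all of them. -/
private lemma aux_gordan {k n : ℕ} (v : Fin n → (Fin k → ℚ))
    (hv : ∀ c : Fin n → ℚ, (∀ j, 0 ≤ c j) → ∑ j, c j • v j = 0 → ∀ j, c j = 0) :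
    ∃ y : Fin k → ℚ, ∀ j, 0 < ∑ i, v j i * y i := by
  classical
  have h0 := aux_zero_not_mem_hull v hv
  set V : Fin n → (Fin k → ℝ) := fun j i => ((v j i : ℚ) : ℝ) with hV
  have hcl : IsClosed (convexHull ℝ (Set.range V)) :=
    ((Set.finite_range V).isCompact_convexHull ℝ).isClosed
  obtain ⟨f, u, hfu, hu0⟩ :=
    geometric_hahn_banach_closed_point (convex_convexHull ℝ _) hcl h0
  rw [map_zero] at hu0
  set ε : ℝ := -u with hε
  have hεpos : 0 < ε := by simp only [hε]; linarith
  have hcoord : ∀ x : Fin k → ℝ, f x = ∑ i, x i * f (fun j' => if i = j' then 1 else 0) := by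
    intro x
    conv_lhs => rw [pi_eq_sum_univ x]
    rw [map_sum]
    simp only [map_smul, smul_eq_mul]
  set wr : Fin k → ℝ := fun i => -(f (fun j' => if i = j' then 1 else 0)) with hwr
  have hlow : ∀ j, ε < ∑ i, V j i * wr i := by
    intro j
    have h1 : f (V j) < u := hfu _ (subset_convexHull ℝ _ (Set.mem_range_self j))
    have h2 : ∑ i, V j i * wr i = -(f (V j)) := by
      rw [hcoord (V j), ← Finset.sum_neg_distrib]
      apply Finset.sum_congr rfl
      intro i _
      simp only [hwr]
      ring
    rw [h2, hε]
    linarith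
  set B : ℚ := ∑ j, ∑ i, |v j i| with hB
  have hBnn : (0:ℚ) ≤ B := Finset.sum_nonneg fun j _ =>
    Finset.sum_nonneg fun i _ => abs_nonneg _
  have hBR : (0:ℝ) ≤ (B:ℝ) := by exact_mod_cast hBnn
  have hbound : ∀ j i, |V j i| ≤ (B:ℝ) + 1 := by
    intro j i
    have h1 : |v j i| ≤ ∑ i', |v j i'| :=
      Finset.single_le_sum (fun i' _ => abs_nonneg (v j i')) (Finset.mem_univ i)
    have h2 : ∑ i', |v j i'| ≤ B := by
      rw [hB]
      exact Finset.single_le_sum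
        (fun j' _ => Finset.sum_nonneg fun i' _ => abs_nonneg (v j' i')) (Finset.mem_univ j)
    have h3 : |v j i| ≤ B := h1.trans h2
    have h4 : |V j i| = ((|v j i| : ℚ) : ℝ) := by
      simp only [hV, Rat.cast_abs]
    rw [h4]
    have : ((|v j i| : ℚ) : ℝ) ≤ (B:ℝ) := by exact_mod_cast h3
    linarith
  have hden : (0:ℝ) < (k:ℝ) * ((B:ℝ) + 1) + 1 := by
    have : (0:ℝ) ≤ (k:ℝ) := Nat.cast_nonneg k
    nlinarith
  set δ : ℝ := ε / ((k:ℝ) * ((B:ℝ) + 1) + 1) with hδ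
  have hδpos : 0 < δ := div_pos hεpos hden
  have hq : ∀ i : Fin k, ∃ q : ℚ, wr i < (q:ℝ) ∧ (q:ℝ) < wr i + δ := fun i =>
    exists_rat_btwn (lt_add_of_pos_right _ hδpos)
  choose q hq1 hq2 using hq
  refine ⟨q, fun j => ?_⟩
  have key : (0:ℝ) < ∑ i, V j i * (q i : ℝ) := by
    have e1 : ∑ i, V j i * (q i:ℝ) = ∑ i, V j i * wr i + ∑ i, V j i * ((q i:ℝ) - wr i) := by
      rw [← Finset.sum_add_distrib]
      apply Finset.sum_congr rfl
      intro i _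
      ring
    have e2 : ∀ i : Fin k, -(((B:ℝ) + 1) * δ) ≤ V j i * ((q i:ℝ) - wr i) := by
      intro i
      have h1 : 0 ≤ (q i:ℝ) - wr i := le_of_lt (sub_pos.mpr (hq1 i))
      have h2 : (q i:ℝ) - wr i ≤ δ := by linarith [hq2 i]
      have h3 := hbound j i
      nlinarith [neg_abs_le (V j i), le_abs_self (V j i), abs_nonneg (V j i)]
    have e3 : -((k:ℝ) * (((B:ℝ) + 1) * δ)) ≤ ∑ i, V j i * ((q i:ℝ) - wr i) := by
      calc -((k:ℝ) * (((B:ℝ) + 1) * δ)) = ∑ _i : Fin k, -(((B:ℝ) + 1) * δ) := by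
            simp [Finset.sum_const, Finset.card_univ]
        _ ≤ ∑ i, V j i * ((q i:ℝ) - wr i) := Finset.sum_le_sum fun i _ => e2 i
    have e4 : (k:ℝ) * (((B:ℝ) + 1) * δ) < ε := by
      have h5 : (k:ℝ) * ((B:ℝ) + 1) < (k:ℝ) * ((B:ℝ) + 1) + 1 := lt_add_one _
      calc (k:ℝ) * (((B:ℝ) + 1) * δ) = ((k:ℝ) * ((B:ℝ) + 1)) * δ := by ring
        _ < ((k:ℝ) * ((B:ℝ) + 1) + 1) * δ := mul_lt_mul_of_pos_right h5 hδpos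
        _ = ε := by rw [hδ]; field_simp
    linarith [hlow j]
  have hcast : ((∑ i, v j i * q i : ℚ) : ℝ) = ∑ i, V j i * (q i:ℝ) := by
    push_cast
    rfl
  exact_mod_cast hcast ▸ key

/-- Part A: the occurring weights of a finitely generated graded algebra lie in the
additive monoid generated by a finite set of occurring weights. -/
private lemma aux_weights_in_closure {k : ℕ} {A : Type} [CommRing A] [Algebra ℂ A]
    (𝒜 : (Fin k → ℤ) → Submodule ℂ A) [GradedAlgebra 𝒜] (hfg : Algebra.FiniteType ℂ A) :
    ∃ S : Finset (Fin k → ℤ), (∀ w ∈ S, 𝒜 w ≠ ⊥) ∧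
      ∀ w, 𝒜 w ≠ ⊥ → w ∈ AddSubmonoid.closure (S : Set (Fin k → ℤ)) := by
  classical
  obtain ⟨s, hs⟩ := hfg
  set S : Finset (Fin k → ℤ) := s.biUnion fun a => (DirectSum.decompose 𝒜 a).support with hS
  have hSne : ∀ w ∈ S, 𝒜 w ≠ ⊥ := by
    intro w hw
    rw [hS, Finset.mem_biUnion] at hw
    obtain ⟨a, _, hw⟩ := hw
    rw [DFinsupp.mem_support_iff] at hw
    intro hbot
    apply hw
    have : Subsingleton (𝒜 w) := by rw [hbot]; infer_instance
    exact Subsingleton.elim _ _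
  refine ⟨S, hSne, ?_⟩
  set N := AddSubmonoid.closure (S : Set (Fin k → ℤ)) with hN
  set U : Set A := {a | ∃ w ∈ N, a ∈ 𝒜 w} with hU
  -- U is a multiplicative submonoid
  have hUmul : ∀ x ∈ U, ∀ y ∈ U, x * y ∈ U := by
    rintro x ⟨w₁, hw₁, hx⟩ y ⟨w₂, hw₂, hy⟩
    exact ⟨w₁ + w₂, add_mem hw₁ hw₂, SetLike.mul_mem_graded hx hy⟩
  have hU1 : (1 : A) ∈ U := ⟨0, zero_mem N, SetLike.one_mem_graded 𝒜⟩
  -- generators lie in the span of U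
  have hgen : (s : Set A) ⊆ (Submodule.span ℂ U : Set A) := by
    intro a ha
    rw [SetLike.mem_coe, ← DirectSum.sum_support_decompose 𝒜 a]
    apply Submodule.sum_mem
    intro w hw
    apply Submodule.subset_span
    refine ⟨w, AddSubmonoid.subset_closure ?_, (DirectSum.decompose 𝒜 a w).2⟩
    rw [hS, Finset.coe_biUnion]
    exact Set.mem_biUnion (Finset.mem_coe.mpr ha) hw
  -- the span of U is everything
  have hUsub : ↑(Submonoid.closure U) ⊆ (Submodule.span ℂ U : Set A) := by
    have hcl : Submonoid.closure U ≤
        ({ carrier := U, mul_mem' := fun hx hy => hUmul _ hx _ hy,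
           one_mem' := hU1 } : Submonoid A) :=
      Submonoid.closure_le.mpr fun x hx => hx
    intro x hx
    exact Submodule.subset_span (hcl hx)
  have h2 := Algebra.adjoin_eq_span_of_subset (R := ℂ) (A := A) hUsub
  have h1 : Algebra.adjoin ℂ U = ⊤ := by
    rw [eq_top_iff, ← hs]
    apply Algebra.adjoin_le
    intro a ha
    have h3 : a ∈ Subalgebra.toSubmodule (Algebra.adjoin ℂ U) := by
      rw [h2]; exact hgen ha
    rwa [Subalgebra.mem_toSubmodule] at h3
  have hspan : Submodule.span ℂ U = ⊤ := by
    rw [h1, Algebra.top_toSubmodule] at h2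
    exact h2.symm
  -- conclude
  intro w₀ hw₀
  by_contra hw₀N
  obtain ⟨a, ha, hane⟩ := (Submodule.ne_bot_iff _).mp hw₀
  -- projection onto the w₀ component
  have hUker : ∀ u ∈ U, (DirectSum.decompose 𝒜 u w₀ : A) = 0 := by
    rintro u ⟨w', hw', hu⟩
    have hne : w' ≠ w₀ := fun h => hw₀N (h ▸ hw')
    rw [DirectSum.decompose_of_mem_ne 𝒜 hu hne]
  have hker : Submodule.span ℂ U ≤ LinearMap.ker
      ((DFinsupp.lapply w₀).comp (DirectSum.decomposeAlgEquiv 𝒜).toLinearMap) := by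
    apply Submodule.span_le.mpr
    intro u hu
    rw [SetLike.mem_coe, LinearMap.mem_ker, LinearMap.comp_apply]
    exact Subtype.ext (hUker u hu)
  have hmem : a ∈ Submodule.span ℂ U := hspan ▸ Submodule.mem_top
  have := hker hmem
  rw [LinearMap.mem_ker, LinearMap.comp_apply] at this
  apply hane
  have h4 : (DirectSum.decompose 𝒜 a w₀ : A) = a := DirectSum.decompose_of_mem_same 𝒜 ha
  have h5 : (DirectSum.decompose 𝒜 a w₀ : A) = 0 := by
    have h6 : DirectSum.decompose 𝒜 a w₀ = 0 := this
    rw [h6]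
    rfl
  rw [← h4, h5]

private lemma aux_clear_denom {k : ℕ} (q : Fin k → ℚ) :
    ∃ (m : Fin k → ℤ) (D : ℕ), 0 < D ∧ ∀ i, (m i : ℚ) = (D : ℚ) * q i := by
  classical
  refine ⟨fun i => (q i).num * (((∏ i', (q i').den) / (q i).den : ℕ) : ℤ), ∏ i', (q i').den,
    Finset.prod_pos fun i _ => (q i).pos, fun i => ?_⟩
  have hdvd : (q i).den ∣ ∏ i', (q i').den := Finset.dvd_prod_of_mem _ (Finset.mem_univ i)
  have hden : ((q i).den : ℚ) ≠ 0 := by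
    exact_mod_cast (q i).den_nz
  have h1 : ((((∏ i', (q i').den) / (q i).den : ℕ)) : ℚ) =
      ((∏ i', (q i').den : ℕ) : ℚ) / ((q i).den : ℚ) := Nat.cast_div hdvd hden
  rw [Int.cast_mul, Int.cast_natCast, h1]
  conv_rhs => rw [← Rat.num_div_den (q i)]
  ring

/-- `v` lies in the (rational) weight cone of the grading `𝒜`: it is a nonnegative
rational combination of weights of nonzero homogeneous components. -/
def InWeightCone {k : ℕ} {A : Type} [CommRing A] [Algebra ℂ A]
    (𝒜 : (Fin k → ℤ) → Submodule ℂ A) (v : Fin k → ℚ) : Prop :=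
  ∃ (s : Finset (Fin k → ℤ)) (c : (Fin k → ℤ) → ℚ),
    (∀ w ∈ s, 𝒜 w ≠ ⊥ ∧ 0 ≤ c w) ∧
    v = ∑ w ∈ s, c w • fun i => ((w i : ℚ))

theorem quasicone_of_pointed_weight_cone
    (k : ℕ) (A : Type) [CommRing A] [Algebra ℂ A]
    (𝒜 : (Fin k → ℤ) → Submodule ℂ A) [GradedAlgebra 𝒜]
    (hfg : Algebra.FiniteType ℂ A)
    (h0 : (𝒜 0 : Set A) = Set.range (algebraMap ℂ A))
    (hpointed : ∀ v : Fin k → ℚ, InWeightCone 𝒜 v → InWeightCone 𝒜 (-v) → v = 0) :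
    ∃ φ : (Fin k → ℤ) →+ ℤ,
      (∀ w : Fin k → ℤ, 𝒜 w ≠ ⊥ → 0 ≤ φ w) ∧
      (∀ w : Fin k → ℤ, 𝒜 w ≠ ⊥ → φ w = 0 → w = 0) := by
  classical
  obtain ⟨S, hSne, hScl⟩ := aux_weights_in_closure 𝒜 hfg
  set S' : Finset (Fin k → ℤ) := S.erase 0 with hS'
  set n := S'.card with hn
  set u : Fin n → (Fin k → ℤ) := fun j => ((S'.equivFin.symm j : {x // x ∈ S'}) : Fin k → ℤ)
    with hu
  have huS' : ∀ j, u j ∈ S' := fun j => (S'.equivFin.symm j).2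
  have huS : ∀ j, 𝒜 (u j) ≠ ⊥ := fun j => hSne _ (Finset.mem_of_mem_erase (huS' j))
  have hune : ∀ j, u j ≠ 0 := fun j => Finset.ne_of_mem_erase (huS' j)
  set v : Fin n → (Fin k → ℚ) := fun j i => ((u j i : ℤ) : ℚ) with hv
  have hrel : ∀ c : Fin n → ℚ, (∀ j, 0 ≤ c j) → ∑ j, c j • v j = 0 → ∀ j, c j = 0 := by
    intro c hc hsum
    by_contra hne
    push_neg at hne
    obtain ⟨j0, hj0⟩ := hne
    have hj0pos : 0 < c j0 := lt_of_le_of_ne (hc j0) (Ne.symm hj0)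
    have hin1 : InWeightCone 𝒜 (v j0) := by
      refine ⟨{u j0}, fun w => if w = u j0 then 1 else 0, ?_, ?_⟩
      · intro w hw
        rw [Finset.mem_singleton] at hw
        subst hw
        exact ⟨huS j0, by simp⟩
      · rw [Finset.sum_singleton]
        beta_reduce
        rw [if_pos rfl, one_smul]
    have hin2 : InWeightCone 𝒜 (-(v j0)) := by
      refine ⟨S'.erase (u j0),
        fun w => if hw : w ∈ S' then c (S'.equivFin ⟨w, hw⟩) / c j0 else 0, ?_, ?_⟩
      · intro w hw
        have hwS' : w ∈ S' := Finset.mem_of_mem_erase hw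
        refine ⟨hSne _ (Finset.mem_of_mem_erase hwS'), ?_⟩
        beta_reduce
        rw [dif_pos hwS']
        exact div_nonneg (hc _) hj0pos.le
      · have hterm : ∀ j : Fin n,
            ((if hw : u j ∈ S' then c (S'.equivFin ⟨u j, hw⟩) / c j0 else 0) •
              fun i => ((u j i : ℤ) : ℚ)) = (c j0)⁻¹ • (c j • v j) := by
          intro j
          rw [dif_pos (huS' j)]
          have h7 : (⟨u j, huS' j⟩ : {x // x ∈ S'}) = S'.equivFin.symm j :=
            Subtype.ext rfl
          rw [h7, Equiv.apply_symm_apply, smul_smul, div_eq_inv_mul]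
        have hfull : (∑ w ∈ S',
            (if hw : w ∈ S' then c (S'.equivFin ⟨w, hw⟩) / c j0 else 0) •
              fun i => ((w i : ℤ) : ℚ)) = 0 := by
          have h8 : (∑ w ∈ S',
              (if hw : w ∈ S' then c (S'.equivFin ⟨w, hw⟩) / c j0 else 0) •
                fun i => ((w i : ℤ) : ℚ))
              = ∑ j : Fin n,
              ((if hw : u j ∈ S' then c (S'.equivFin ⟨u j, hw⟩) / c j0 else 0) •
                fun i => ((u j i : ℤ) : ℚ)) := by
            apply Finset.sum_bij (fun (w : Fin k → ℤ) (hw : w ∈ S') => S'.equivFin ⟨w, hw⟩)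
            · intro a ha
              exact Finset.mem_univ _
            · intro a₁ ha₁ a₂ ha₂ h
              have h9 := congrArg
                (fun x => ((S'.equivFin.symm x : {x // x ∈ S'}) : Fin k → ℤ)) h
              simpa using h9
            · intro j _
              refine ⟨u j, huS' j, ?_⟩
              have h7 : (⟨u j, huS' j⟩ : {x // x ∈ S'}) = S'.equivFin.symm j :=
                Subtype.ext rfl
              rw [h7, Equiv.apply_symm_apply]
            · intro a ha
              have h9 : a = u (S'.equivFin ⟨a, ha⟩) :=
                (congrArg Subtype.val (Equiv.symm_apply_apply S'.equivFin ⟨a, ha⟩)).symm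
              conv_lhs => rw [h9]
          rw [h8, Finset.sum_congr rfl fun j _ => hterm j, ← Finset.smul_sum, hsum, smul_zero]
        have h10 := Finset.sum_erase_add S' (fun w =>
            (if hw : w ∈ S' then c (S'.equivFin ⟨w, hw⟩) / c j0 else 0) •
              fun i => ((w i : ℤ) : ℚ)) (huS' j0)
        beta_reduce at h10
        rw [hfull] at h10
        have hj0term : ((if hw : u j0 ∈ S' then c (S'.equivFin ⟨u j0, hw⟩) / c j0 else 0) •
            fun i => ((u j0 i : ℤ) : ℚ)) = v j0 := by
          rw [dif_pos (huS' j0)]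
          have h7 : (⟨u j0, huS' j0⟩ : {x // x ∈ S'}) = S'.equivFin.symm j0 :=
            Subtype.ext rfl
          rw [h7, Equiv.apply_symm_apply, div_self hj0pos.ne', one_smul]
        rw [hj0term] at h10
        exact (eq_neg_of_add_eq_zero_left h10).symm
    have hz := hpointed (v j0) hin1 hin2
    apply hune j0
    funext i
    have hvi := congrFun hz i
    rw [hv] at hvi
    simp only [Pi.zero_apply] at hvi ⊢
    exact_mod_cast hvi
  obtain ⟨y, hy⟩ := aux_gordan v hrel
  obtain ⟨m, D, hD, hm⟩ := aux_clear_denom y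
  set φ : (Fin k → ℤ) →+ ℤ := AddMonoidHom.mk' (fun w => ∑ i, w i * m i) (by
    intro a b
    rw [← Finset.sum_add_distrib]
    apply Finset.sum_congr rfl
    intro i _
    rw [Pi.add_apply]
    ring) with hφ
  have hφapp : ∀ w, φ w = ∑ i, w i * m i := by
    intro w
    rw [hφ]
    rfl
  have hφpos : ∀ w, w ∈ S' → 0 < φ w := by
    intro w hw
    set j := S'.equivFin ⟨w, hw⟩ with hj
    have hwj : u j = w := congrArg Subtype.val (Equiv.symm_apply_apply S'.equivFin ⟨w, hw⟩)
    have hcast : ((φ w : ℤ) : ℚ) = (D : ℚ) * ∑ i, v j i * y i := by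
      rw [hφapp]
      push_cast
      rw [Finset.mul_sum]
      apply Finset.sum_congr rfl
      intro i _
      rw [hv, ← hwj, hm i]
      ring
    have h2 : (0:ℚ) < ((φ w : ℤ) : ℚ) := by
      rw [hcast]
      exact mul_pos (by exact_mod_cast hD) (hy j)
    exact_mod_cast h2
  have hkey : ∀ w, w ∈ AddSubmonoid.closure (S : Set (Fin k → ℤ)) →
      (0 ≤ φ w) ∧ (φ w = 0 → w = 0) := by
    intro w hw
    refine AddSubmonoid.closure_induction
      (motive := fun x _ => (0 ≤ φ x) ∧ (φ x = 0 → x = 0)) ?_ ?_ ?_ hw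
    · intro x hx
      by_cases hx0 : x = 0
      · subst hx0
        simp
      · have hxS' : x ∈ S' := by
          rw [hS']
          exact Finset.mem_erase.mpr ⟨hx0, hx⟩
        exact ⟨(hφpos x hxS').le, fun h => absurd h (hφpos x hxS').ne'⟩
    · simp
    · intro x z hx hz hpx hpz
      rw [map_add]
      constructor
      · exact add_nonneg hpx.1 hpz.1
      · intro h
        have hx0 : φ x = 0 := by linarith [hpx.1, hpz.1]
        have hz0 : φ z = 0 := by linarith [hpx.1, hpz.1]
        rw [hpx.2 hx0, hpz.2 hz0, add_zero]
  exact ⟨φ, fun w hwne => (hkey w (hScl w hwne)).1, fun w hwne h => (hkey w (hScl w hwne)).2 h⟩
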